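/- Let A be a reduced commutative ring, let M be an A-module, and let (w_J)_{J∈J'} be a finite or well-ordered family in M. Suppose that for every J ∈ J' and every a ∈ A, if the image of w_J in M[a⁻¹] lies in the A[a⁻¹]-span of {w_{J'} : J' ∈ J', J' ≺ J}, then a = 0 (by an inductive triviality argument). Then the family (w_J) is A-linearly independent. -/
import Mathlib


theorem linearIndependent_of_localized_span_condition (A : Type*) [CommRing A] [IsReduced A]
    (M : Type*) [AddCommGroup M] [Module A M]
    (ι : Type*) [LinearOrder ι] [WellFoundedLT ι] (w : ι → M)
    (h : ∀ (J : ι) (a : A),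
      LocalizedModule.mkLinearMap (Submonoid.powers a) M (w J) ∈
        Submodule.span (Localization.Away a)
          ((LocalizedModule.mkLinearMap (Submonoid.powers a) M) '' (w '' {J' | J' < J})) →
      a = 0) :
    LinearIndependent A w := by
  rw [linearIndependent_iff]
  intro l hl
  by_contra hne
  have hsupp : l.support.Nonempty := Finsupp.support_nonempty_iff.mpr hne
  set J := l.support.max' hsupp with hJ
  have hJmem : J ∈ l.support := l.support.max'_mem hsupp
  set a := l J with ha
  have ha0 : a ≠ 0 := Finsupp.mem_support_iff.mp hJmem
  set f := LocalizedModule.mkLinearMap (Submonoid.powers a) M with hf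
  have hl' : ∑ i ∈ l.support, l i • w i = 0 := by
    simpa [Finsupp.linearCombination_apply, Finsupp.sum] using hl
  have hkey : a • w J = - ∑ i ∈ l.support.erase J, l i • w i := by
    have h2 := Finset.add_sum_erase _ (fun i => l i • w i) hJmem
    rw [hl'] at h2
    exact eq_neg_of_add_eq_zero_left h2
  have hmem : f (w J) ∈ Submodule.span (Localization.Away a)
      (f '' (w '' {J' | J' < J})) := by
    have hunit : (IsLocalization.Away.invSelf a : Localization.Away a) •
        ((algebraMap A (Localization.Away a) a) • f (w J)) = f (w J) := by
      rw [← mul_smul, mul_comm, IsLocalization.Away.mul_invSelf, one_smul]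
    rw [← hunit]
    apply Submodule.smul_mem
    have h3 : (algebraMap A (Localization.Away a) a) • f (w J) = f (a • w J) := by
      rw [map_smul, algebraMap_smul]
    rw [h3, hkey, map_neg, map_sum]
    apply Submodule.neg_mem
    apply Submodule.sum_mem
    intro i hi
    rw [map_smul, ← algebraMap_smul (Localization.Away a)]
    apply Submodule.smul_mem
    apply Submodule.subset_span
    exact ⟨w i, ⟨i, lt_of_le_of_ne (l.support.le_max' i (Finset.mem_of_mem_erase hi))
      (Finset.ne_of_mem_erase hi), rfl⟩, rfl⟩
  exact ha0 (h J a hmem)
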